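/- The polynomial D = det(x_{ij}) - 1 in 9 indeterminates x_{11},...,x_{33} over ℂ is irreducible. -/

import Mathlib

open MvPolynomial Matrix

theorem linear_irreducible' {R : Type*} [CommRing R] [IsDomain R] {a b : R}
    (ha : a ≠ 0) (h : ∀ d : R, d ∣ a → d ∣ b → IsUnit d) :
    Irreducible (Polynomial.C a * Polynomial.X + Polynomial.C b) := by
  set p := Polynomial.C a * Polynomial.X + Polynomial.C b with hp
  have hdeg : p.natDegree = 1 := Polynomial.natDegree_linear ha
  have hc1 : p.coeff 1 = a := by simp [hp]
  have hc0 : p.coeff 0 = b := by simp [hp]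
  have key : ∀ f g : Polynomial R, p = f * g → f.natDegree = 0 → IsUnit f := by
    intro f g hfg h0
    obtain ⟨c, hc⟩ := Polynomial.natDegree_eq_zero.mp h0
    have hda : c ∣ a := ⟨g.coeff 1, by
      rw [← hc1, hfg, ← hc, Polynomial.coeff_C_mul]⟩
    have hdb : c ∣ b := ⟨g.coeff 0, by
      rw [← hc0, hfg, ← hc, Polynomial.coeff_C_mul]⟩
    rw [← hc]
    exact (h c hda hdb).map Polynomial.C
  constructor
  · intro hu
    have := Polynomial.natDegree_eq_zero_of_isUnit hu
    rw [hdeg] at this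
    exact one_ne_zero this
  · intro f g hfg
    have hp0 : p ≠ 0 := fun h0 => by simp [h0] at hdeg
    have hf0 : f ≠ 0 := fun h0 => hp0 (by simp [hfg, h0])
    have hg0 : g ≠ 0 := fun h0 => hp0 (by simp [hfg, h0])
    have hsum : f.natDegree + g.natDegree = 1 := by
      rw [← Polynomial.natDegree_mul hf0 hg0, ← hfg, hdeg]
    rcases Nat.add_eq_one_iff.mp hsum with ⟨h1, _⟩ | ⟨_, h1⟩
    · exact Or.inl (key f g hfg h1)
    · exact Or.inr (key g f (by rw [hfg, mul_comm]) h1)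

noncomputable def splitVar {σ : Type*} [DecidableEq σ] (v : σ) :
    MvPolynomial σ ℂ ≃ₐ[ℂ] Polynomial (MvPolynomial {s : σ // s ≠ v} ℂ) :=
  (renameEquiv ℂ (Equiv.optionSubtypeNe v).symm).trans (optionEquivLeft ℂ _)

theorem splitVar_X_self {σ : Type*} [DecidableEq σ] (v : σ) :
    splitVar v (X v) = Polynomial.X := by
  simp [splitVar, rename_X, Equiv.optionSubtypeNe_symm_self, optionEquivLeft_X_none]

theorem splitVar_X_ne {σ : Type*} [DecidableEq σ] (v s : σ) (h : s ≠ v) :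
    splitVar v (X s) = Polynomial.C (X ⟨s, h⟩) := by
  simp [splitVar, rename_X, Equiv.optionSubtypeNe_symm_of_ne h, optionEquivLeft_X_some]

theorem prime_X_mv {σ : Type*} [DecidableEq σ] (v : σ) :
    Prime (X v : MvPolynomial σ ℂ) := by
  rw [← MulEquiv.prime_iff (splitVar v).toMulEquiv]
  show Prime (splitVar v (X v))
  rw [splitVar_X_self]
  exact Polynomial.prime_X

abbrev σ1 : Type := {s : Fin 3 × Fin 3 // s ≠ ((0 : Fin 3), (0 : Fin 3))}

noncomputable def aPoly : MvPolynomial σ1 ℂ :=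
  X ⟨(1,1), by decide⟩ * X ⟨(2,2), by decide⟩ - X ⟨(1,2), by decide⟩ * X ⟨(2,1), by decide⟩

noncomputable def bPoly : MvPolynomial σ1 ℂ :=
  -(X ⟨(0,1), by decide⟩ * X ⟨(1,0), by decide⟩ * X ⟨(2,2), by decide⟩)
  + X ⟨(0,1), by decide⟩ * X ⟨(1,2), by decide⟩ * X ⟨(2,0), by decide⟩
  + X ⟨(0,2), by decide⟩ * X ⟨(1,0), by decide⟩ * X ⟨(2,1), by decide⟩
  - X ⟨(0,2), by decide⟩ * X ⟨(1,1), by decide⟩ * X ⟨(2,0), by decide⟩ - 1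

theorem aPoly_irreducible : Irreducible aPoly := by
  set w : σ1 := ⟨(1,1), by decide⟩ with hw
  rw [← MulEquiv.irreducible_iff (splitVar w).toMulEquiv]
  show Irreducible (splitVar w aPoly)
  set w22 : {t : σ1 // t ≠ w} := ⟨⟨(2,2), by decide⟩, by simp [hw, Subtype.ext_iff]⟩ with hw22
  set w12 : {t : σ1 // t ≠ w} := ⟨⟨(1,2), by decide⟩, by simp [hw, Subtype.ext_iff]⟩ with hw12
  set w21 : {t : σ1 // t ≠ w} := ⟨⟨(2,1), by decide⟩, by simp [hw, Subtype.ext_iff]⟩ with hw21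
  have hsplit : splitVar w aPoly
      = Polynomial.C (X w22) * Polynomial.X + Polynomial.C (-(X w12 * X w21)) := by
    have e22 := splitVar_X_ne w ⟨(2,2), by decide⟩ w22.2
    have e12 := splitVar_X_ne w ⟨(1,2), by decide⟩ w12.2
    have e21 := splitVar_X_ne w ⟨(2,1), by decide⟩ w21.2
    have e11 : splitVar w (X ⟨(1,1), by decide⟩) = Polynomial.X := splitVar_X_self w
    simp only [aPoly, map_sub, _root_.map_mul, splitVar_X_self, e11, e22, e12, e21,
      Polynomial.C_neg, Polynomial.C_mul]
    ring
  rw [hsplit]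
  apply linear_irreducible' (MvPolynomial.X_ne_zero _)
  intro d hd1 hd2
  obtain ⟨c, hc⟩ := hd1
  rcases (prime_X_mv w22).irreducible.isUnit_or_isUnit hc with hu | hu
  · exact hu
  · exfalso
    obtain ⟨u, rfl⟩ := hu
    have hXd : X w22 ∣ d := ⟨↑u⁻¹, by rw [hc, Units.mul_inv_cancel_right]⟩
    have : (X w22 : MvPolynomial {t : σ1 // t ≠ w} ℂ) ∣ X w12 * X w21 :=
      (dvd_neg).mp (hXd.trans hd2)
    rcases (prime_X_mv w22).2.2 _ _ this with h | h
    · rw [MvPolynomial.X_dvd_X] at h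
      exact absurd h (by simp [hw22, hw12, Subtype.ext_iff])
    · rw [MvPolynomial.X_dvd_X] at h
      exact absurd h (by simp [hw22, hw21, Subtype.ext_iff])

theorem aPoly_ne_zero : aPoly ≠ 0 := by
  intro h
  have := congrArg (eval fun s : σ1 => if s.1 = ((1:Fin 3),(1:Fin 3)) ∨ s.1 = ((2:Fin 3),(2:Fin 3)) then (1:ℂ) else 0) h
  simp [aPoly] at this

theorem aPoly_not_dvd_bPoly : ¬ aPoly ∣ bPoly := by
  rintro ⟨q, hq⟩
  have := congrArg (eval fun _ : σ1 => (0:ℂ)) hq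
  simp [aPoly, bPoly] at this

theorem det_sub_one_irreducible :
    Irreducible
      ((Matrix.of fun i j : Fin 3 => (MvPolynomial.X (i, j) :
          MvPolynomial (Fin 3 × Fin 3) ℂ)).det - 1) := by
  have hdet : (Matrix.of fun i j : Fin 3 => (MvPolynomial.X (i, j) :
        MvPolynomial (Fin 3 × Fin 3) ℂ)).det - 1
      = X (0,0) * X (1,1) * X (2,2) - X (0,0) * X (1,2) * X (2,1)
        - X (0,1) * X (1,0) * X (2,2) + X (0,1) * X (1,2) * X (2,0)
        + X (0,2) * X (1,0) * X (2,1) - X (0,2) * X (1,1) * X (2,0) - 1 := by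
    rw [Matrix.det_fin_three]; rfl
  rw [hdet, ← MulEquiv.irreducible_iff (splitVar ((0,0) : Fin 3 × Fin 3)).toMulEquiv]
  show Irreducible (splitVar ((0,0) : Fin 3 × Fin 3) _)
  have hD : splitVar ((0,0) : Fin 3 × Fin 3)
      (X (0,0) * X (1,1) * X (2,2) - X (0,0) * X (1,2) * X (2,1)
      - X (0,1) * X (1,0) * X (2,2) + X (0,1) * X (1,2) * X (2,0)
      + X (0,2) * X (1,0) * X (2,1) - X (0,2) * X (1,1) * X (2,0) - 1)
      = Polynomial.C aPoly * Polynomial.X + Polynomial.C bPoly := by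
    have h11 := splitVar_X_ne ((0,0) : Fin 3 × Fin 3) (1,1) (by decide)
    have h22 := splitVar_X_ne ((0,0) : Fin 3 × Fin 3) (2,2) (by decide)
    have h12 := splitVar_X_ne ((0,0) : Fin 3 × Fin 3) (1,2) (by decide)
    have h21 := splitVar_X_ne ((0,0) : Fin 3 × Fin 3) (2,1) (by decide)
    have h01 := splitVar_X_ne ((0,0) : Fin 3 × Fin 3) (0,1) (by decide)
    have h10 := splitVar_X_ne ((0,0) : Fin 3 × Fin 3) (1,0) (by decide)
    have h02 := splitVar_X_ne ((0,0) : Fin 3 × Fin 3) (0,2) (by decide)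
    have h20 := splitVar_X_ne ((0,0) : Fin 3 × Fin 3) (2,0) (by decide)
    simp only [map_sub, map_add, _root_.map_mul, _root_.map_one, map_neg, splitVar_X_self,
      h11, h22, h12, h21, h01, h10, h02, h20, aPoly, bPoly]
    ring
  rw [hD]
  apply linear_irreducible' aPoly_ne_zero
  intro d hda hdb
  obtain ⟨c, hc⟩ := hda
  rcases aPoly_irreducible.isUnit_or_isUnit hc with hu | hu
  · exact hu
  · exfalso
    obtain ⟨u, rfl⟩ := hu
    have had : aPoly ∣ d := ⟨↑u⁻¹, by rw [hc, Units.mul_inv_cancel_right]⟩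
    exact aPoly_not_dvd_bPoly (had.trans hdb)
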